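/- Let x ∈ ℝⁿ be such that the flow S_t x is defined and f(S_t x) ≠ 0 for all t ≥ 0, let B be a continuous symmetric-matrix-valued function along the forward orbit of x, and let M be a C¹ symmetric-matrix-valued function on a neighborhood of the forward orbit of x satisfying LM(S_t x) = −P_{S_t x}^T B(S_t x) P_{S_t x} for all t ≥ 0. Then the function t ↦ f(S_t x)^T M(S_t x) f(S_t x) / ‖f(S_t x)‖⁴ is constant on [0,∞). -/

import Mathlib

open Matrix Set Filter MeasureTheory

/-- Euclidean norm of a vector in `ℝⁿ`. -/
noncomputable def euclNorm {n : ℕ} (v : Fin n → ℝ) : ℝ := Real.sqrt (∑ i, v i ^ 2)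

/-- Operator norm of a matrix induced by the Euclidean norm. -/
noncomputable def opn {n : ℕ} (A : Matrix (Fin n) (Fin n) ℝ) : ℝ :=
  ‖Matrix.toEuclideanCLM (𝕜 := ℝ) A‖

/-- The projection `P_x = I - f(x)f(x)ᵀ/‖f(x)‖²` onto the hyperplane perpendicular to `f(x)`. -/
noncomputable def Pm {n : ℕ} (f : (Fin n → ℝ) → Fin n → ℝ) (x : Fin n → ℝ) :
    Matrix (Fin n) (Fin n) ℝ :=
  1 - (euclNorm (f x) ^ 2)⁻¹ • Matrix.vecMulVec (f x) (f x)

/-- The differential operator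
`LM(x) = M′(x) + Df(x)ᵀM(x) + M(x)Df(x) - M(x)f(x)f(x)ᵀ(Df(x)+Df(x)ᵀ)/‖f(x)‖²
  - (Df(x)+Df(x)ᵀ)f(x)f(x)ᵀM(x)/‖f(x)‖²`,
where the orbital derivative `M′(x)` has entries `∇M_ij(x) ⋅ f(x)`. -/
noncomputable def LMop {n : ℕ} (f : (Fin n → ℝ) → Fin n → ℝ)
    (Df M : (Fin n → ℝ) → Matrix (Fin n) (Fin n) ℝ) (x : Fin n → ℝ) :
    Matrix (Fin n) (Fin n) ℝ :=
  (Matrix.of fun i j => fderiv ℝ (fun y => M y i j) x (f x))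
    + (Df x)ᵀ * M x + M x * Df x
    - (euclNorm (f x) ^ 2)⁻¹ • (M x * Matrix.vecMulVec (f x) (f x) * (Df x + (Df x)ᵀ))
    - (euclNorm (f x) ^ 2)⁻¹ • ((Df x + (Df x)ᵀ) * Matrix.vecMulVec (f x) (f x) * M x)


private lemma enorm_sq' {n : ℕ} (v : Fin n → ℝ) : euclNorm v ^ 2 = v ⬝ᵥ v := by
  have h : euclNorm v ^ 2 = ∑ i, v i ^ 2 :=
    Real.sq_sqrt (Finset.sum_nonneg fun i _ => sq_nonneg _)
  rw [h]
  simp [dotProduct, sq]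

private lemma vmv_mulVec {n : ℕ} (v u : Fin n → ℝ) :
    (Matrix.vecMulVec v v) *ᵥ u = (v ⬝ᵥ u) • v := by
  ext i
  simp only [Matrix.mulVec, Matrix.vecMulVec_apply, dotProduct, Pi.smul_apply,
    smul_eq_mul]
  rw [Finset.sum_mul]
  exact Finset.sum_congr rfl fun j _ => by ring

private lemma dot_mulVec_sum {n : ℕ} (v : Fin n → ℝ) (A : Matrix (Fin n) (Fin n) ℝ)
    (u : Fin n → ℝ) : v ⬝ᵥ A *ᵥ u = ∑ i, ∑ j, v i * A i j * u j := by
  simp [dotProduct, Matrix.mulVec, Finset.mul_sum, mul_assoc]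

private lemma contract_LM {n : ℕ} (f : (Fin n → ℝ) → Fin n → ℝ)
    (Df M : (Fin n → ℝ) → Matrix (Fin n) (Fin n) ℝ) (y : Fin n → ℝ) :
    f y ⬝ᵥ (LMop f Df M y) *ᵥ f y =
      ((Df y *ᵥ f y) ⬝ᵥ (M y *ᵥ f y)
        + f y ⬝ᵥ ((Matrix.of fun i j => fderiv ℝ (fun z => M z i j) y (f y)) *ᵥ f y)
        + f y ⬝ᵥ (M y *ᵥ (Df y *ᵥ f y)))
      - 2 * (f y ⬝ᵥ f y)⁻¹ * (f y ⬝ᵥ (M y *ᵥ f y)) * (2 * (f y ⬝ᵥ (Df y *ᵥ f y))) := by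
  have hT : ∀ u : Fin n → ℝ, f y ⬝ᵥ ((Df y)ᵀ *ᵥ u) = (Df y *ᵥ f y) ⬝ᵥ u := by
    intro u; rw [Matrix.dotProduct_mulVec, Matrix.vecMul_transpose]
  have hAq : f y ⬝ᵥ ((Df y + (Df y)ᵀ) *ᵥ f y) = 2 * (f y ⬝ᵥ (Df y *ᵥ f y)) := by
    rw [Matrix.add_mulVec, dotProduct_add, hT,
      dotProduct_comm (Df y *ᵥ f y) (f y)]
    ring
  have h1 : ((Df y)ᵀ * M y) *ᵥ f y = (Df y)ᵀ *ᵥ (M y *ᵥ f y) :=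
    (Matrix.mulVec_mulVec _ _ _).symm
  have h2 : (M y * Df y) *ᵥ f y = M y *ᵥ (Df y *ᵥ f y) :=
    (Matrix.mulVec_mulVec _ _ _).symm
  have h3 : (M y * Matrix.vecMulVec (f y) (f y) * (Df y + (Df y)ᵀ)) *ᵥ f y
      = (f y ⬝ᵥ ((Df y + (Df y)ᵀ) *ᵥ f y)) • (M y *ᵥ f y) := by
    rw [← Matrix.mulVec_mulVec, ← Matrix.mulVec_mulVec, vmv_mulVec, Matrix.mulVec_smul]
  have h4 : ((Df y + (Df y)ᵀ) * Matrix.vecMulVec (f y) (f y) * M y) *ᵥ f y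
      = (f y ⬝ᵥ (M y *ᵥ f y)) • ((Df y + (Df y)ᵀ) *ᵥ f y) := by
    rw [← Matrix.mulVec_mulVec, ← Matrix.mulVec_mulVec, vmv_mulVec, Matrix.mulVec_smul]
  rw [LMop, Matrix.sub_mulVec, Matrix.sub_mulVec, Matrix.add_mulVec, Matrix.add_mulVec,
    Matrix.smul_mulVec, Matrix.smul_mulVec, h1, h2, h3, h4,
    dotProduct_sub, dotProduct_sub, dotProduct_add,
    dotProduct_add, dotProduct_smul, dotProduct_smul,
    dotProduct_smul, dotProduct_smul, hT, hAq, enorm_sq']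
  simp only [smul_eq_mul]
  ring

/-- if `M` is a C¹ symmetric-matrix-valued function with
`LM(S_t x) = −P_{S_t x}ᵀ B(S_t x) P_{S_t x}` along the forward orbit of `x`, then
`t ↦ f(S_t x)ᵀ M(S_t x) f(S_t x)/‖f(S_t x)‖⁴` is constant on `[0,∞)`. -/
theorem stmt19 {n : ℕ} (f : (Fin n → ℝ) → Fin n → ℝ)
    (Df : (Fin n → ℝ) → Matrix (Fin n) (Fin n) ℝ)
    (hf : ContDiff ℝ 1 f)
    (hDf : ∀ y, HasFDerivAt f (LinearMap.toContinuousLinearMap ((Df y).mulVecLin)) y)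
    (x : Fin n → ℝ)
    -- `g t = S_t x` is the forward trajectory through `x`
    (g : ℝ → Fin n → ℝ) (hg0 : g 0 = x)
    (hg : ∀ t ≥ (0:ℝ), HasDerivWithinAt g (f (g t)) (Set.Ici 0) t)
    (hfg : ∀ t ≥ (0:ℝ), f (g t) ≠ 0)
    -- `B` is continuous and symmetric-matrix-valued along the forward orbit of `x`
    (B : (Fin n → ℝ) → Matrix (Fin n) (Fin n) ℝ)
    (hBc : ∀ i j, ContinuousOn (fun y => B y i j) {y | ∃ t ≥ (0:ℝ), y = g t})
    (hBsym : ∀ t ≥ (0:ℝ), (B (g t))ᵀ = B (g t))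
    -- `M` is C¹ and symmetric-matrix-valued on an open neighborhood of the forward orbit
    (V : Set (Fin n → ℝ)) (hV : IsOpen V) (hgV : ∀ t ≥ (0:ℝ), g t ∈ V)
    (M : (Fin n → ℝ) → Matrix (Fin n) (Fin n) ℝ)
    (hM : ∀ i j, ContDiffOn ℝ 1 (fun y => M y i j) V)
    (hMsym : ∀ y ∈ V, (M y)ᵀ = M y)
    -- `M` satisfies the PDE along the forward orbit of `x`
    (hPDE : ∀ t ≥ (0:ℝ), LMop f Df M (g t) = -((Pm f (g t))ᵀ * B (g t) * Pm f (g t))) :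
    ∀ t ≥ (0:ℝ),
      (f (g t) ⬝ᵥ (M (g t)).mulVec (f (g t))) / euclNorm (f (g t)) ^ 4 =
        (f x ⬝ᵥ (M x).mulVec (f x)) / euclNorm (f x) ^ 4 := by
  classical
  have key : ∀ s ≥ (0:ℝ), HasDerivWithinAt
      (fun r => (f (g r) ⬝ᵥ (M (g r)).mulVec (f (g r))) / euclNorm (f (g r)) ^ 4)
      0 (Set.Ici 0) s := by
    intro s hs
    have hwmem := hgV s hs
    have hρnn : 0 ≤ f (g s) ⬝ᵥ f (g s) := Finset.sum_nonneg fun i _ => mul_self_nonneg _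
    have hρne : f (g s) ⬝ᵥ f (g s) ≠ 0 := fun h =>
      hfg s hs (dotProduct_self_eq_zero.mp h)
    have hw' : HasDerivWithinAt (fun r => f (g r)) (Df (g s) *ᵥ f (g s)) (Set.Ici 0) s := by
      have := (hDf (g s)).comp_hasDerivWithinAt s (hg s hs)
      exact this
    have hwi : ∀ i, HasDerivWithinAt (fun r => f (g r) i) ((Df (g s) *ᵥ f (g s)) i)
        (Set.Ici 0) s := fun i => hasDerivWithinAt_pi.1 hw' i
    have hMij : ∀ i j, HasDerivWithinAt (fun r => M (g r) i j)
        (fderiv ℝ (fun y => M y i j) (g s) (f (g s))) (Set.Ici 0) s := by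
      intro i j
      have hd : DifferentiableAt ℝ (fun y => M y i j) (g s) :=
        ((hM i j).differentiableOn one_ne_zero).differentiableAt (hV.mem_nhds hwmem)
      exact hd.hasFDerivAt.comp_hasDerivWithinAt s (hg s hs)
    have hN : HasDerivWithinAt (fun r => f (g r) ⬝ᵥ (M (g r)) *ᵥ f (g r))
        ((Df (g s) *ᵥ f (g s)) ⬝ᵥ (M (g s) *ᵥ f (g s))
          + f (g s) ⬝ᵥ ((Matrix.of fun i j => fderiv ℝ (fun z => M z i j) (g s) (f (g s))) *ᵥ f (g s))
          + f (g s) ⬝ᵥ (M (g s) *ᵥ (Df (g s) *ᵥ f (g s)))) (Set.Ici 0) s := by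
      have h1 : HasDerivWithinAt (fun r => ∑ i, ∑ j, f (g r) i * M (g r) i j * f (g r) j)
          (∑ i, ∑ j, ((Df (g s) *ᵥ f (g s)) i * M (g s) i j * f (g s) j
            + f (g s) i * fderiv ℝ (fun y => M y i j) (g s) (f (g s)) * f (g s) j
            + f (g s) i * M (g s) i j * (Df (g s) *ᵥ f (g s)) j)) (Set.Ici 0) s := by
        refine HasDerivWithinAt.fun_sum fun i _ => HasDerivWithinAt.fun_sum fun j _ => ?_
        have h := ((hwi i).mul (hMij i j)).mul (hwi j)
        refine h.congr_deriv ?_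
        simp only [Pi.mul_apply]
        ring
      have e1 : (fun r => f (g r) ⬝ᵥ (M (g r)) *ᵥ f (g r))
          = fun r => ∑ i, ∑ j, f (g r) i * M (g r) i j * f (g r) j :=
        funext fun r => dot_mulVec_sum _ _ _
      rw [e1]
      convert h1 using 1
      rw [dot_mulVec_sum, dot_mulVec_sum, dot_mulVec_sum, ← Finset.sum_add_distrib,
        ← Finset.sum_add_distrib]
      refine Finset.sum_congr rfl fun i _ => ?_
      rw [← Finset.sum_add_distrib, ← Finset.sum_add_distrib]
      refine Finset.sum_congr rfl fun j _ => ?_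
      simp [Matrix.of_apply]
    have hρ : HasDerivWithinAt (fun r => f (g r) ⬝ᵥ f (g r))
        (2 * (f (g s) ⬝ᵥ (Df (g s) *ᵥ f (g s)))) (Set.Ici 0) s := by
      have h1 : HasDerivWithinAt (fun r => ∑ i, f (g r) i * f (g r) i)
          (∑ i, ((Df (g s) *ᵥ f (g s)) i * f (g s) i
            + f (g s) i * (Df (g s) *ᵥ f (g s)) i)) (Set.Ici 0) s :=
        HasDerivWithinAt.fun_sum fun i _ => (hwi i).mul (hwi i)
      have e1 : (fun r => f (g r) ⬝ᵥ f (g r)) = fun r => ∑ i, f (g r) i * f (g r) i := rfl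
      rw [e1]
      convert h1 using 1
      show 2 * ∑ i, f (g s) i * (Df (g s) *ᵥ f (g s)) i = _
      rw [Finset.sum_add_distrib, two_mul]
      congr 1
      exact Finset.sum_congr rfl fun i _ => mul_comm _ _
    -- the PDE contracted with f(g s)
    have hPz : (Pm f (g s)) *ᵥ f (g s) = 0 := by
      rw [Pm, Matrix.sub_mulVec, Matrix.one_mulVec, Matrix.smul_mulVec, vmv_mulVec,
        enorm_sq', smul_smul, inv_mul_cancel₀ hρne, one_smul, sub_self]
    have hq0 : f (g s) ⬝ᵥ (LMop f Df M (g s)) *ᵥ f (g s) = 0 := by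
      rw [hPDE s hs, Matrix.neg_mulVec, dotProduct_neg, ← Matrix.mulVec_mulVec, hPz,
        Matrix.mulVec_zero, dotProduct_zero, neg_zero]
    have hkey := contract_LM f Df M (g s)
    rw [hq0] at hkey
    -- assemble
    have hρ2 : HasDerivWithinAt (fun r => (f (g r) ⬝ᵥ f (g r)) ^ 2)
        ((2:ℕ) * (f (g s) ⬝ᵥ f (g s)) ^ 1 * (2 * (f (g s) ⬝ᵥ (Df (g s) *ᵥ f (g s)))))
        (Set.Ici 0) s := hρ.pow 2
    have hdiv := hN.div hρ2 (pow_ne_zero 2 hρne)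
    have heq : (fun r => (f (g r) ⬝ᵥ (M (g r)).mulVec (f (g r))) / euclNorm (f (g r)) ^ 4)
        = fun r => (f (g r) ⬝ᵥ (M (g r)) *ᵥ f (g r)) / (f (g r) ⬝ᵥ f (g r)) ^ 2 := by
      funext r
      congr 1
      rw [← enorm_sq']
      ring
    rw [heq]
    refine hdiv.congr_deriv (Eq.symm ?_)
    rw [eq_comm, div_eq_zero_iff]
    left
    have hinv : (f (g s) ⬝ᵥ f (g s))⁻¹ * (f (g s) ⬝ᵥ f (g s)) = 1 := inv_mul_cancel₀ hρne
    push_cast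
    linear_combination (-((f (g s) ⬝ᵥ f (g s)) ^ 2)) * hkey
      + 4 * (f (g s) ⬝ᵥ (M (g s) *ᵥ f (g s))) * (f (g s) ⬝ᵥ (Df (g s) *ᵥ f (g s)))
        * (f (g s) ⬝ᵥ f (g s)) * hinv
  intro t ht
  have hcont : ContinuousOn
      (fun r => (f (g r) ⬝ᵥ (M (g r)).mulVec (f (g r))) / euclNorm (f (g r)) ^ 4)
      (Set.Icc 0 t) := fun s hs =>
    ((key s hs.1).continuousWithinAt).mono Set.Icc_subset_Ici_self
  have hconst := constant_of_has_deriv_right_zero hcont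
    (fun s hs => (key s hs.1).mono (Set.Ici_subset_Ici.mpr hs.1))
  have hφ := hconst t (Set.right_mem_Icc.mpr ht)
  simpa [hg0] using hφ
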